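/- (Erdős–Szekeres upper bound.) For every n ≥ 3, every finite set of at least C(2n−4, n−2) + 1 points in the plane in general position contains n points in convex position, where C(a,b) denotes the binomial coefficient. -/

import Mathlib

/-- A finite set of points in the plane is in general position if no three of
its points are collinear. -/
def GeneralPosition (P : Finset (ℝ × ℝ)) : Prop :=
  ∀ p ∈ P, ∀ q ∈ P, ∀ r ∈ P, p ≠ q → p ≠ r → q ≠ r →
    ¬ Collinear ℝ ({p, q, r} : Set (ℝ × ℝ))

/-- A finite set of points is in convex position if no point of the set lies in
the convex hull of the other points. -/
def ConvexPosition (S : Finset (ℝ × ℝ)) : Prop :=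
  ∀ p ∈ S, p ∉ convexHull ℝ ((S : Set (ℝ × ℝ)) \ {p})

/-- The ptSlope of the line through two points (with distinct x-coordinates). -/
noncomputable def ptSlope (p q : ℝ × ℝ) : ℝ := (q.2 - p.2) / (q.1 - p.1)

/-- The points of `P` have pairwise distinct x-coordinates. -/
def DistinctX (P : Finset (ℝ × ℝ)) : Prop :=
  ∀ p ∈ P, ∀ q ∈ P, p ≠ q → p.1 ≠ q.1

/-- A `t`-cup in `P`: a sequence `q 0, …, q (t-1)` of points of `P` with strictly
increasing x-coordinates and non-decreasing slopes of consecutive segments. -/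
def IsGCup (P : Finset (ℝ × ℝ)) (t : ℕ) (q : ℕ → ℝ × ℝ) : Prop :=
  (∀ i, i < t → q i ∈ P) ∧
  (∀ i, i + 1 < t → (q i).1 < (q (i + 1)).1) ∧
  (∀ i, i + 2 < t → ptSlope (q i) (q (i + 1)) ≤ ptSlope (q (i + 1)) (q (i + 2)))

/-- A `t`-cap in `P`: a sequence of points of `P` with strictly increasing
x-coordinates and non-increasing slopes of consecutive segments. -/
def IsGCap (P : Finset (ℝ × ℝ)) (t : ℕ) (q : ℕ → ℝ × ℝ) : Prop :=
  (∀ i, i < t → q i ∈ P) ∧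
  (∀ i, i + 1 < t → (q i).1 < (q (i + 1)).1) ∧
  (∀ i, i + 2 < t → ptSlope (q (i + 1)) (q (i + 2)) ≤ ptSlope (q i) (q (i + 1)))



/-- Twice the signed area of the triangle `u v w`. -/
def sg (u v w : ℝ × ℝ) : ℝ := (v.1 - u.1) * (w.2 - u.2) - (w.1 - u.1) * (v.2 - u.2)

lemma sg_cyc (u v w : ℝ × ℝ) : sg u v w = sg v w u := by unfold sg; ring

lemma sg_swap (u v w : ℝ × ℝ) : sg u v w = - sg u w v := by unfold sg; ring

lemma slope_lt_iff {u v w : ℝ × ℝ} (h1 : u.1 < v.1) (h2 : v.1 < w.1) :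
    ptSlope u v < ptSlope v w ↔ 0 < sg u v w := by
  unfold ptSlope sg
  rw [div_lt_div_iff₀ (by linarith) (by linarith)]
  constructor <;> intro h <;> nlinarith

lemma slope_lt_iff₂ {u v w : ℝ × ℝ} (h1 : u.1 < v.1) (h2 : v.1 < w.1) :
    ptSlope u v < ptSlope u w ↔ 0 < sg u v w := by
  unfold ptSlope sg
  rw [div_lt_div_iff₀ (by linarith) (by linarith)]
  constructor <;> intro h <;> nlinarith

lemma slope_lt_iff₃ {u v w : ℝ × ℝ} (h1 : u.1 < v.1) (h2 : v.1 < w.1) :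
    ptSlope u w < ptSlope v w ↔ 0 < sg u v w := by
  unfold ptSlope sg
  rw [div_lt_div_iff₀ (by linarith) (by linarith)]
  constructor <;> intro h <;> nlinarith

lemma slope_le_iff {u v w : ℝ × ℝ} (h1 : u.1 < v.1) (h2 : v.1 < w.1) :
    ptSlope u v ≤ ptSlope v w ↔ 0 ≤ sg u v w := by
  unfold ptSlope sg
  rw [div_le_div_iff₀ (by linarith) (by linarith)]
  constructor <;> intro h <;> nlinarith

lemma slope_le_iff₂ {u v w : ℝ × ℝ} (h1 : u.1 < v.1) (h2 : v.1 < w.1) :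
    ptSlope u v ≤ ptSlope u w ↔ 0 ≤ sg u v w := by
  unfold ptSlope sg
  rw [div_le_div_iff₀ (by linarith) (by linarith)]
  constructor <;> intro h <;> nlinarith

lemma slope_le_iff₃ {u v w : ℝ × ℝ} (h1 : u.1 < v.1) (h2 : v.1 < w.1) :
    ptSlope u w ≤ ptSlope v w ↔ 0 ≤ sg u v w := by
  unfold ptSlope sg
  rw [div_le_div_iff₀ (by linarith) (by linarith)]
  constructor <;> intro h <;> nlinarith

lemma collinear_of_sg_eq_zero {u v w : ℝ × ℝ} (h1 : u.1 ≠ v.1) (h0 : sg u v w = 0) :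
    Collinear ℝ ({u, v, w} : Set (ℝ × ℝ)) := by
  rw [collinear_iff_of_mem (Set.mem_insert u _)]
  refine ⟨v - u, ?_⟩
  have hne : v.1 - u.1 ≠ 0 := sub_ne_zero.mpr (Ne.symm h1)
  rintro p (rfl | rfl | hp)
  · exact ⟨0, by simp⟩
  · exact ⟨1, by simp⟩
  · rw [Set.mem_singleton_iff] at hp
    subst hp
    refine ⟨(p.1 - u.1) / (v.1 - u.1), ?_⟩
    have e1 : (p.1 - u.1) / (v.1 - u.1) * (v.1 - u.1) = p.1 - u.1 := div_mul_cancel₀ _ hne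
    have e2 : (p.1 - u.1) / (v.1 - u.1) * (v.2 - u.2) = p.2 - u.2 := by
      rw [div_mul_eq_mul_div, div_eq_iff hne]
      unfold sg at h0; nlinarith
    rw [Prod.ext_iff]
    constructor <;> simp [Prod.smul_def, smul_eq_mul] <;> linarith

lemma xmono {n : ℕ} {q : ℕ → ℝ × ℝ} (hx : ∀ i, i + 1 < n → (q i).1 < (q (i + 1)).1) :
    ∀ i j, i < j → j < n → (q i).1 < (q j).1 := by
  intro i j hij hj
  obtain ⟨d, rfl⟩ : ∃ d, j = i + d + 1 := ⟨j - i - 1, by omega⟩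
  clear hij
  induction d with
  | zero => exact hx i hj
  | succ d IH =>
      have h1 : i + d + 1 < n := by omega
      have := hx (i + d + 1) (by omega)
      have := IH h1
      have e : i + (d + 1) + 1 = (i + d + 1) + 1 := by omega
      rw [e]
      linarith

lemma cup_slope_mono {n : ℕ} {q : ℕ → ℝ × ℝ}
    (hx : ∀ i, i + 1 < n → (q i).1 < (q (i + 1)).1)
    (hs : ∀ i, i + 2 < n → ptSlope (q i) (q (i + 1)) < ptSlope (q (i + 1)) (q (i + 2))) :
    ∀ i j k, i < j → j < k → k < n → ptSlope (q i) (q j) < ptSlope (q j) (q k) := by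
  have hx' := xmono hx
  -- A: chord slope from `i` to `j+1` is at most the last edge slope
  have A : ∀ d i, i + d + 1 < n →
      ptSlope (q i) (q (i + d + 1)) ≤ ptSlope (q (i + d)) (q (i + d + 1)) := by
    intro d
    induction d with
    | zero => intro i _; exact le_refl _
    | succ d IH =>
        intro i h
        have h1 : i + d + 1 < n := by omega
        have h2 : i + d + 2 < n := by omega
        have huv : (q i).1 < (q (i + d + 1)).1 := hx' i (i + d + 1) (by omega) h1
        have hvw : (q (i + d + 1)).1 < (q (i + d + 2)).1 := hx (i + d + 1) h2
        have key : ptSlope (q i) (q (i + d + 1)) < ptSlope (q (i + d + 1)) (q (i + d + 2)) :=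
          lt_of_le_of_lt (IH i h1) (hs (i + d) h2)
        have hsg : 0 < sg (q i) (q (i + d + 1)) (q (i + d + 2)) :=
          (slope_lt_iff huv hvw).mp key
        have := (slope_lt_iff₃ huv hvw).mpr hsg
        have e : i + (d + 1) + 1 = i + d + 2 := by omega
        rw [e]
        have e2 : i + (d + 1) = i + d + 1 := by omega
        rw [e2]
        exact this.le
  -- B: chord slope from `j` to `j+d+1` is at least the first edge slope
  have B : ∀ d j, j + d + 1 < n →
      ptSlope (q j) (q (j + 1)) ≤ ptSlope (q j) (q (j + d + 1)) := by
    intro d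
    induction d with
    | zero => intro j _; exact le_refl _
    | succ d IH =>
        intro j h
        have h1 : j + d + 1 < n := by omega
        have h2 : j + d + 2 < n := by omega
        have huv : (q j).1 < (q (j + d + 1)).1 := hx' j (j + d + 1) (by omega) h1
        have hvw : (q (j + d + 1)).1 < (q (j + d + 2)).1 := hx (j + d + 1) h2
        have key : ptSlope (q j) (q (j + d + 1)) < ptSlope (q (j + d + 1)) (q (j + d + 2)) :=
          lt_of_le_of_lt (A d j h1) (hs (j + d) h2)
        have hsg : 0 < sg (q j) (q (j + d + 1)) (q (j + d + 2)) :=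
          (slope_lt_iff huv hvw).mp key
        have h3 := (slope_lt_iff₂ huv hvw).mpr hsg
        have e : j + (d + 1) + 1 = j + d + 2 := by omega
        rw [e]
        exact le_trans (IH j h1) h3.le
  intro i j k hij hjk hk
  obtain ⟨d, rfl⟩ : ∃ d, j = i + d + 1 := ⟨j - i - 1, by omega⟩
  obtain ⟨e, rfl⟩ : ∃ e, k = (i + d + 1) + e + 1 := ⟨k - (i + d + 1) - 1, by omega⟩
  calc ptSlope (q i) (q (i + d + 1)) ≤ ptSlope (q (i + d)) (q (i + d + 1)) :=
        A d i (by omega)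
    _ < ptSlope (q (i + d + 1)) (q (i + d + 1 + 1)) := hs (i + d) (by omega)
    _ ≤ ptSlope (q (i + d + 1)) (q (i + d + 1 + e + 1)) := B e (i + d + 1) (by omega)

lemma cup_sg {n : ℕ} {q : ℕ → ℝ × ℝ}
    (hx : ∀ i, i + 1 < n → (q i).1 < (q (i + 1)).1)
    (hs : ∀ i, i + 2 < n → ptSlope (q i) (q (i + 1)) < ptSlope (q (i + 1)) (q (i + 2))) :
    ∀ i j k, i < j → j < k → k < n → 0 < sg (q i) (q j) (q k) := by
  intro i j k hij hjk hk
  have hx' := xmono hx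
  exact (slope_lt_iff (hx' i j hij (by omega)) (hx' j k hjk hk)).mp
    (cup_slope_mono hx hs i j k hij hjk hk)

lemma halfspace_convex (a b c : ℝ) : Convex ℝ {z : ℝ × ℝ | 0 ≤ a * z.1 + b * z.2 + c} := by
  intro x hx y hy s t hs ht hst
  simp only [Set.mem_setOf_eq] at *
  have : a * (s • x + t • y).1 + b * (s • x + t • y).2 + c
      = s * (a * x.1 + b * x.2 + c) + t * (a * y.1 + b * y.2 + c) := by
    simp [Prod.smul_def, smul_eq_mul]
    linear_combination (-c) * hst
  rw [this]
  positivity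

lemma sg_affine (u w : ℝ × ℝ) (ε : ℝ) :
    ∃ a b c : ℝ, ∀ z : ℝ × ℝ, ε * sg u w z = a * z.1 + b * z.2 + c := by
  refine ⟨ε * (-(w.2 - u.2)), ε * (w.1 - u.1), ε * ((w.2 - u.2) * u.1 - (w.1 - u.1) * u.2), ?_⟩
  intro z
  unfold sg
  ring

lemma convexPos_of_sg {n : ℕ} (hn : 3 ≤ n) (q : ℕ → ℝ × ℝ) (ε : ℝ)
    (hx : ∀ i j, i < j → j < n → (q i).1 < (q j).1)
    (hσ : ∀ i j k, i < j → j < k → k < n → 0 < ε * sg (q i) (q j) (q k)) :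
    ConvexPosition ((Finset.range n).image q) := by
  have hinj : ∀ i j, i < n → j < n → q i = q j → i = j := by
    intro i j hi hj hqe
    by_contra hne
    rcases Nat.lt_or_ge i j with h | h
    · exact absurd (hx i j h hj) (by rw [hqe]; exact lt_irrefl _)
    · have : j < i := by omega
      exact absurd (hx j i this hi) (by rw [hqe]; exact lt_irrefl _)
  intro p hp
  obtain ⟨i, hi, rfl⟩ : ∃ i, i < n ∧ q i = p := by
    simpa [Finset.mem_image] using hp
  -- describe the complement set
  have hdesc : ((((Finset.range n).image q : Finset (ℝ × ℝ)) : Set (ℝ × ℝ)) \ {q i})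
      ⊆ {z | ∃ j, j < n ∧ j ≠ i ∧ q j = z} := by
    rintro z ⟨hz1, hz2⟩
    simp only [Finset.coe_image, Finset.coe_range, Set.mem_image, Set.mem_Iio] at hz1
    obtain ⟨j, hj, rfl⟩ := hz1
    exact ⟨j, hj, fun hji => hz2 (by simp [hji]), rfl⟩
  -- case split on position of i
  rcases Nat.eq_zero_or_pos i with rfl | hpos
  · -- leftmost point: halfspace x ≥ (q 1).1
    intro hmem
    have hsub : ((((Finset.range n).image q : Finset (ℝ × ℝ)) : Set (ℝ × ℝ)) \ {q 0})
        ⊆ {z : ℝ × ℝ | 0 ≤ 1 * z.1 + 0 * z.2 + (-(q 1).1)} := by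
      intro z hz
      obtain ⟨j, hj, hji, rfl⟩ := hdesc hz
      simp only [Set.mem_setOf_eq, one_mul, zero_mul, add_zero]
      rcases Nat.lt_or_ge 1 j with h | h
      · have := hx 1 j h hj; linarith
      · interval_cases j
        · omega
        · linarith
    have := convexHull_min hsub (halfspace_convex 1 0 (-(q 1).1)) hmem
    simp only [Set.mem_setOf_eq, one_mul, zero_mul, add_zero] at this
    have := hx 0 1 (by omega) (by omega)
    linarith
  rcases Nat.lt_or_ge (i + 1) n with hlt | hge
  · -- interior point
    intro hmem
    set u := q (i - 1) with hu
    set w := q (i + 1) with hw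
    obtain ⟨a, b, c, habc⟩ := sg_affine u w ε
    have hsub : ((((Finset.range n).image q : Finset (ℝ × ℝ)) : Set (ℝ × ℝ)) \ {q i})
        ⊆ {z : ℝ × ℝ | 0 ≤ a * z.1 + b * z.2 + c} := by
      intro z hz
      obtain ⟨j, hj, hji, rfl⟩ := hdesc hz
      simp only [Set.mem_setOf_eq]
      rw [← habc]
      rcases Nat.lt_trichotomy j (i - 1) with h | h | h
      · have h3 := hσ j (i - 1) (i + 1) h (by omega) hlt
        have : sg u w (q j) = sg (q j) u w := by rw [sg_cyc, sg_cyc]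
        rw [this]
        linarith
      · subst h
        have : sg u w u = 0 := by unfold sg; ring
        rw [hu] at this ⊢
        rw [this]; simp
      · rcases Nat.lt_trichotomy j (i + 1) with h2 | h2 | h2
        · omega
        · subst h2
          have : sg u w w = 0 := by unfold sg; ring
          rw [hw] at this ⊢
          rw [this]; simp
        · have h3 := hσ (i - 1) (i + 1) j (by omega) h2 hj
          exact (h3).le
    have hhull := convexHull_min hsub (halfspace_convex a b c) hmem
    simp only [Set.mem_setOf_eq] at hhull
    rw [← habc] at hhull
    have h4 := hσ (i - 1) i (i + 1) (by omega) (by omega) hlt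
    have : sg u w (q i) = - sg u (q i) w := sg_swap u w (q i)
    rw [this] at hhull
    nlinarith
  · -- rightmost point: i = n - 1
    intro hmem
    have hin : i + 1 = n := by omega
    have hsub : ((((Finset.range n).image q : Finset (ℝ × ℝ)) : Set (ℝ × ℝ)) \ {q i})
        ⊆ {z : ℝ × ℝ | 0 ≤ (-1) * z.1 + 0 * z.2 + (q (i - 1)).1} := by
      intro z hz
      obtain ⟨j, hj, hji, rfl⟩ := hdesc hz
      simp only [Set.mem_setOf_eq, neg_one_mul, zero_mul, add_zero]
      rcases Nat.lt_trichotomy j (i - 1) with h | h | h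
      · have := hx j (i - 1) h (by omega); linarith
      · subst h; linarith
      · omega
    have := convexHull_min hsub (halfspace_convex (-1) 0 ((q (i - 1)).1)) hmem
    simp only [Set.mem_setOf_eq, neg_one_mul, zero_mul, add_zero] at this
    have := hx (i - 1) i (by omega) hi
    linarith

lemma sg_eq_zero_of_slope_eq {u v w : ℝ × ℝ} (h1 : u.1 < v.1) (h2 : v.1 < w.1)
    (he : ptSlope u v = ptSlope v w) : sg u v w = 0 := by
  have hle : 0 ≤ sg u v w := (slope_le_iff h1 h2).mp he.le
  have hnlt : ¬ 0 < sg u v w := fun h => absurd ((slope_lt_iff h1 h2).mpr h) (by rw [he]; exact lt_irrefl _)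
  linarith [lt_or_eq_of_le hle]

lemma ne_of_x_lt {p q : ℝ × ℝ} (h : p.1 < q.1) : p ≠ q := fun he => by rw [he] at h; exact lt_irrefl _ h

/-- In a general-position set, cup slopes are strictly increasing. -/
lemma cup_strict {P : Finset (ℝ × ℝ)} (hgp : GeneralPosition P) {n : ℕ} {q : ℕ → ℝ × ℝ}
    (h : IsGCup P n q) :
    ∀ i, i + 2 < n → ptSlope (q i) (q (i + 1)) < ptSlope (q (i + 1)) (q (i + 2)) := by
  obtain ⟨hm, hx, hs⟩ := h
  intro i hi
  rcases lt_or_eq_of_le (hs i hi) with h | h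
  · exact h
  exfalso
  have h1 : (q i).1 < (q (i + 1)).1 := hx i (by omega)
  have h2 : (q (i + 1)).1 < (q (i + 2)).1 := hx (i + 1) hi
  have h0 : sg (q i) (q (i + 1)) (q (i + 2)) = 0 := sg_eq_zero_of_slope_eq h1 h2 h
  exact hgp (q i) (hm i (by omega)) (q (i + 1)) (hm (i + 1) (by omega)) (q (i + 2)) (hm (i + 2) hi)
    (ne_of_x_lt h1) (ne_of_x_lt (h1.trans h2)) (ne_of_x_lt h2)
    (collinear_of_sg_eq_zero (ne_of_lt h1) h0)

lemma cap_strict {P : Finset (ℝ × ℝ)} (hgp : GeneralPosition P) {n : ℕ} {q : ℕ → ℝ × ℝ}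
    (h : IsGCap P n q) :
    ∀ i, i + 2 < n → ptSlope (q (i + 1)) (q (i + 2)) < ptSlope (q i) (q (i + 1)) := by
  obtain ⟨hm, hx, hs⟩ := h
  intro i hi
  rcases lt_or_eq_of_le (hs i hi) with h | h
  · exact h
  exfalso
  have h1 : (q i).1 < (q (i + 1)).1 := hx i (by omega)
  have h2 : (q (i + 1)).1 < (q (i + 2)).1 := hx (i + 1) hi
  have h0 : sg (q i) (q (i + 1)) (q (i + 2)) = 0 := sg_eq_zero_of_slope_eq h1 h2 h.symm
  exact hgp (q i) (hm i (by omega)) (q (i + 1)) (hm (i + 1) (by omega)) (q (i + 2)) (hm (i + 2) hi)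
    (ne_of_x_lt h1) (ne_of_x_lt (h1.trans h2)) (ne_of_x_lt h2)
    (collinear_of_sg_eq_zero (ne_of_lt h1) h0)

/-- Reflection in the x-axis. -/
def refl2 (z : ℝ × ℝ) : ℝ × ℝ := (z.1, -z.2)

lemma ptSlope_refl2 (p q : ℝ × ℝ) : ptSlope (refl2 p) (refl2 q) = - ptSlope p q := by
  unfold ptSlope refl2
  simp only
  rw [show -q.2 - -p.2 = -(q.2 - p.2) by ring, neg_div]

lemma sg_refl2 (u v w : ℝ × ℝ) : sg (refl2 u) (refl2 v) (refl2 w) = - sg u v w := by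
  simp [sg, refl2]; ring

lemma cup_package {P : Finset (ℝ × ℝ)} (hgp : GeneralPosition P) {n : ℕ} (hn : 3 ≤ n)
    {q : ℕ → ℝ × ℝ} (h : IsGCup P n q) :
    ∃ S ⊆ P, S.card = n ∧ ConvexPosition S := by
  have hstrict := cup_strict hgp h
  obtain ⟨hm, hx, hs⟩ := h
  have hx' := xmono hx
  refine ⟨(Finset.range n).image q, ?_, ?_, ?_⟩
  · intro z hz
    obtain ⟨i, hi, rfl⟩ : ∃ i, i < n ∧ q i = z := by simpa [Finset.mem_image] using hz
    exact hm i hi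
  · rw [Finset.card_image_of_injOn, Finset.card_range]
    intro i hi j hj hqe
    simp only [Finset.coe_range, Set.mem_Iio] at hi hj
    by_contra hne
    rcases Nat.lt_or_ge i j with hh | hh
    · exact absurd (hx' i j hh hj) (by rw [hqe]; exact lt_irrefl _)
    · exact absurd (hx' j i (by omega) hi) (by rw [hqe]; exact lt_irrefl _)
  · apply convexPos_of_sg hn q 1 hx'
    intro i j k hij hjk hk
    rw [one_mul]
    exact cup_sg hx hstrict i j k hij hjk hk

lemma cap_package {P : Finset (ℝ × ℝ)} (hgp : GeneralPosition P) {n : ℕ} (hn : 3 ≤ n)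
    {q : ℕ → ℝ × ℝ} (h : IsGCap P n q) :
    ∃ S ⊆ P, S.card = n ∧ ConvexPosition S := by
  have hstrict := cap_strict hgp h
  obtain ⟨hm, hx, hs⟩ := h
  have hx' := xmono hx
  set r := fun i => refl2 (q i) with hr
  have hrx : ∀ i, i + 1 < n → (r i).1 < (r (i + 1)).1 := by
    intro i hi; exact hx i hi
  have hrs : ∀ i, i + 2 < n → ptSlope (r i) (r (i + 1)) < ptSlope (r (i + 1)) (r (i + 2)) := by
    intro i hi
    rw [hr]
    simp only [ptSlope_refl2]
    have := hstrict i hi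
    linarith
  have hsg := cup_sg hrx hrs
  refine ⟨(Finset.range n).image q, ?_, ?_, ?_⟩
  · intro z hz
    obtain ⟨i, hi, rfl⟩ : ∃ i, i < n ∧ q i = z := by simpa [Finset.mem_image] using hz
    exact hm i hi
  · rw [Finset.card_image_of_injOn, Finset.card_range]
    intro i hi j hj hqe
    simp only [Finset.coe_range, Set.mem_Iio] at hi hj
    by_contra hne
    rcases Nat.lt_or_ge i j with hh | hh
    · exact absurd (hx' i j hh hj) (by rw [hqe]; exact lt_irrefl _)
    · exact absurd (hx' j i (by omega) hi) (by rw [hqe]; exact lt_irrefl _)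
  · apply convexPos_of_sg hn q (-1) hx'
    intro i j k hij hjk hk
    have := hsg i j k hij hjk hk
    rw [hr] at this
    simp only [sg_refl2] at this
    linarith

lemma cup_mono {P Q : Finset (ℝ × ℝ)} (h : P ⊆ Q) {t : ℕ} {q : ℕ → ℝ × ℝ}
    (hc : IsGCup P t q) : IsGCup Q t q :=
  ⟨fun i hi => h (hc.1 i hi), hc.2.1, hc.2.2⟩

lemma cap_mono {P Q : Finset (ℝ × ℝ)} (h : P ⊆ Q) {t : ℕ} {q : ℕ → ℝ × ℝ}
    (hc : IsGCap P t q) : IsGCap Q t q :=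
  ⟨fun i hi => h (hc.1 i hi), hc.2.1, hc.2.2⟩

lemma two_points {P : Finset (ℝ × ℝ)} (hdx : DistinctX P) (h2 : 2 ≤ P.card) :
    ∃ q, IsGCup P 2 q ∧ IsGCap P 2 q := by
  obtain ⟨a, ha, b, hb, hab⟩ := Finset.one_lt_card.mp (show 1 < P.card by omega)
  have hne : a.1 ≠ b.1 := hdx a ha b hb hab
  have key : ∀ x y : ℝ × ℝ, x ∈ P → y ∈ P → x.1 < y.1 →
      ∃ q, IsGCup P 2 q ∧ IsGCap P 2 q := by
    intro x y hx hy hxy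
    refine ⟨fun i => if i = 0 then x else y, ⟨?_, ?_, ?_⟩, ⟨?_, ?_, ?_⟩⟩ <;> intro i hi
    · by_cases h : i = 0 <;> simp [h, hx, hy]
    · have : i = 0 := by omega
      subst this; simpa
    · omega
    · by_cases h : i = 0 <;> simp [h, hx, hy]
    · have : i = 0 := by omega
      subst this; simpa
    · omega
  rcases lt_or_gt_of_ne hne with h | h
  · exact key a b ha hb h
  · exact key b a hb ha h

lemma gp_subset {P Q : Finset (ℝ × ℝ)} (h : Q ⊆ P) (hgp : GeneralPosition P) :
    GeneralPosition Q :=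
  fun p hp q hq r hr => hgp p (h hp) q (h hq) r (h hr)

lemma dx_subset {P Q : Finset (ℝ × ℝ)} (h : Q ⊆ P) (hdx : DistinctX P) :
    DistinctX Q :=
  fun p hp q hq => hdx p (h hp) q (h hq)

lemma cupcap : ∀ m a b : ℕ, a + b = m → ∀ P : Finset (ℝ × ℝ),
    GeneralPosition P → DistinctX P → (a + b).choose a + 1 ≤ P.card →
    (∃ q, IsGCup P (a + 2) q) ∨ (∃ q, IsGCap P (b + 2) q) := by
  intro m
  induction m using Nat.strong_induction_on with
  | _ m IH =>
  intro a b hab P hgp hdx hcard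
  rcases Nat.eq_zero_or_pos a with rfl | ha
  · left
    obtain ⟨q, hq, _⟩ := two_points hdx (by simpa using hcard)
    exact ⟨q, hq⟩
  rcases Nat.eq_zero_or_pos b with rfl | hb
  · right
    obtain ⟨q, _, hq⟩ := two_points hdx (by simp [Nat.choose_self] at hcard; omega)
    exact ⟨q, hq⟩
  obtain ⟨a', rfl⟩ : ∃ a', a = a' + 1 := ⟨a - 1, by omega⟩
  obtain ⟨b', rfl⟩ : ∃ b', b = b' + 1 := ⟨b - 1, by omega⟩
  by_contra hcon
  push_neg at hcon
  obtain ⟨hnocup, hnocap⟩ := hcon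
  classical
  set E := P.filter (fun p => ∃ u, IsGCup P (a' + 2) u ∧ u (a' + 1) = p) with hE
  set F := P.filter (fun p => ¬ ∃ u, IsGCup P (a' + 2) u ∧ u (a' + 1) = p) with hF
  have hEP : E ⊆ P := Finset.filter_subset _ _
  have hFP : F ⊆ P := Finset.filter_subset _ _
  have hcards : E.card + F.card = P.card := Finset.card_filter_add_card_filter_not _
  -- F is small
  have hFsmall : F.card ≤ (a' + (b' + 1)).choose a' := by
    by_contra hbig
    push_neg at hbig
    rcases IH (a' + (b' + 1)) (by omega) a' (b' + 1) rfl F (gp_subset hFP hgp)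
        (dx_subset hFP hdx) (by omega) with ⟨u, hu⟩ | ⟨u, hu⟩
    · -- a cup of size a'+2 in F: its endpoint lies in E, contradiction
      have hlast : u (a' + 1) ∈ F := hu.1 (a' + 1) (by omega)
      rw [hF, Finset.mem_filter] at hlast
      exact hlast.2 ⟨u, cup_mono hFP hu, rfl⟩
    · exact hnocap u (cap_mono hFP hu)
  -- E is big
  have hEbig : (a' + 1 + b').choose (a' + 1) + 1 ≤ E.card := by
    have hp : (a' + 1 + (b' + 1)).choose (a' + 1)
        = (a' + 1 + b').choose a' + (a' + 1 + b').choose (a' + 1) := by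
      have e : a' + 1 + (b' + 1) = (a' + 1 + b') + 1 := by omega
      rw [e, Nat.choose_succ_succ]
    have e2 : a' + (b' + 1) = a' + 1 + b' := by omega
    rw [e2] at hFsmall
    omega
  rcases IH (a' + 1 + b') (by omega) (a' + 1) b' rfl E (gp_subset hEP hgp)
      (dx_subset hEP hdx) hEbig with ⟨u, hu⟩ | ⟨c, hc⟩
  · exact hnocup u (cup_mono hEP hu)
  -- c is a cap of size b'+2 in E; its first point ends a cup of size a'+2
  have hc0 : c 0 ∈ E := hc.1 0 (by omega)
  rw [hE, Finset.mem_filter] at hc0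
  obtain ⟨-, u, hu, hu0⟩ := hc0
  rcases le_total (ptSlope (u a') (u (a' + 1))) (ptSlope (c 0) (c 1)) with hcase | hcase
  · -- extend the cup by c 1
    apply hnocup (fun i => if i < a' + 2 then u i else c 1)
    refine ⟨?_, ?_, ?_⟩
    · intro i hi
      by_cases h : i < a' + 2
      · simp only [if_pos h]; exact hu.1 i h
      · simp only [if_neg h]; exact hEP (hc.1 1 (by omega))
    · intro i hi
      by_cases h : i + 1 < a' + 2
      · simp only [if_pos (by omega : i < a' + 2), if_pos h]
        exact hu.2.1 i h
      · have hi1 : i = a' + 1 := by omega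
        subst hi1
        simp only [if_pos (by omega : a' + 1 < a' + 2), if_neg (by omega : ¬ a' + 1 + 1 < a' + 2)]
        rw [hu0]
        exact hc.2.1 0 (by omega)
    · intro i hi
      by_cases h : i + 2 < a' + 2
      · simp only [if_pos (by omega : i < a' + 2), if_pos (by omega : i + 1 < a' + 2), if_pos h]
        exact hu.2.2 i h
      · have e1 : i < a' + 2 := by omega
        have e2 : i + 1 < a' + 2 := by omega
        simp only [if_pos e1, if_pos e2, if_neg h]
        have hi1 : i = a' := by omega
        rw [hi1, hu0]
        rwa [hu0] at hcase
  · -- extend the cap by u a' in front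
    apply hnocap (fun i => if i = 0 then u a' else c (i - 1))
    refine ⟨?_, ?_, ?_⟩
    · intro i hi
      by_cases h : i = 0
      · simp only [if_pos h]; exact hu.1 a' (by omega)
      · simp only [if_neg h]; exact hEP (hc.1 (i - 1) (by omega))
    · intro i hi
      by_cases h : i = 0
      · subst h
        simp only [if_pos rfl, if_neg (by omega : ¬ (0:ℕ) + 1 = 0)]
        have := hu.2.1 a' (by omega)
        simpa [hu0] using this
      · obtain ⟨k, rfl⟩ : ∃ k, i = k + 1 := ⟨i - 1, by omega⟩
        simp only [if_neg (by omega : ¬ k + 1 = 0), if_neg (by omega : ¬ k + 1 + 1 = 0)]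
        have := hc.2.1 k (by omega)
        simpa using this
    · intro i hi
      by_cases h : i = 0
      · subst h
        simp only [if_pos rfl, if_neg (by omega : ¬ (0:ℕ) + 1 = 0),
          if_neg (by omega : ¬ (0:ℕ) + 2 = 0)]
        simpa [hu0] using hcase
      · obtain ⟨k, rfl⟩ : ∃ k, i = k + 1 := ⟨i - 1, by omega⟩
        simp only [if_neg (by omega : ¬ k + 1 = 0), if_neg (by omega : ¬ k + 1 + 1 = 0),
          if_neg (by omega : ¬ k + 1 + 2 = 0)]
        have := hc.2.2 k (by omega)
        simpa using this

/-- The shear map `(x, y) ↦ (x + c y, y)` as a linear equivalence. -/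
noncomputable def shear (c : ℝ) : (ℝ × ℝ) ≃ₗ[ℝ] (ℝ × ℝ) where
  toFun z := (z.1 + c * z.2, z.2)
  invFun z := (z.1 - c * z.2, z.2)
  map_add' x y := by simp [Prod.ext_iff]; ring
  map_smul' s x := by simp [Prod.ext_iff, smul_eq_mul]; ring
  left_inv z := by simp [Prod.ext_iff]
  right_inv z := by simp [Prod.ext_iff]

lemma exists_good_shear (P : Finset (ℝ × ℝ)) :
    ∃ c : ℝ, ∀ p ∈ P, ∀ q ∈ P, p ≠ q → p.1 + c * p.2 ≠ q.1 + c * q.2 := by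
  classical
  set B := (P ×ˢ P).image (fun pq : (ℝ × ℝ) × (ℝ × ℝ) => (pq.2.1 - pq.1.1) / (pq.1.2 - pq.2.2))
    with hB
  obtain ⟨c, hc⟩ := Infinite.exists_notMem_finset B
  refine ⟨c, ?_⟩
  intro p hp q hq hpq heq
  by_cases h2 : p.2 = q.2
  · apply hpq
    have : p.1 = q.1 := by rw [h2] at heq; linarith
    exact Prod.ext this h2
  · apply hc
    rw [hB, Finset.mem_image]
    refine ⟨(p, q), Finset.mem_product.mpr ⟨hp, hq⟩, ?_⟩
    have hne : p.2 - q.2 ≠ 0 := sub_ne_zero.mpr h2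
    field_simp
    linarith

lemma collinear_linequiv_image {e : (ℝ × ℝ) ≃ₗ[ℝ] (ℝ × ℝ)} {s : Set (ℝ × ℝ)}
    (h : Collinear ℝ (e '' s)) : Collinear ℝ s := by
  rcases s.eq_empty_or_nonempty with rfl | ⟨p₀, hp₀⟩
  · exact collinear_empty ℝ _
  rw [collinear_iff_of_mem (Set.mem_image_of_mem e hp₀)] at h
  obtain ⟨v, hv⟩ := h
  rw [collinear_iff_of_mem hp₀]
  refine ⟨e.symm v, ?_⟩
  intro p hp
  obtain ⟨r, hr⟩ := hv (e p) (Set.mem_image_of_mem e hp)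
  refine ⟨r, ?_⟩
  have := congrArg e.symm hr
  simpa [map_add, map_smul] using this

lemma pullback_convexPos {e : (ℝ × ℝ) ≃ₗ[ℝ] (ℝ × ℝ)} {S' : Finset (ℝ × ℝ)}
    (h : ConvexPosition S') : ConvexPosition (S'.image e.symm) := by
  classical
  intro p hp hmem
  obtain ⟨y, hy, rfl⟩ := Finset.mem_image.mp hp
  have hinj : Function.Injective (e : (ℝ × ℝ) → (ℝ × ℝ)) := e.injective
  have himg : (e : (ℝ × ℝ) → (ℝ × ℝ)) ''
      (((S'.image e.symm : Finset (ℝ × ℝ)) : Set (ℝ × ℝ)) \ {e.symm y})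
      = (S' : Set (ℝ × ℝ)) \ {y} := by
    rw [Set.image_diff hinj]
    congr 1
    · rw [Finset.coe_image, ← Set.image_comp]
      have : (e : (ℝ × ℝ) → (ℝ × ℝ)) ∘ (e.symm : (ℝ × ℝ) → (ℝ × ℝ)) = id := by
        funext z; simp
      rw [this, Set.image_id]
    · simp
  apply h y hy
  have hmm := Set.mem_image_of_mem (e : (ℝ × ℝ) → (ℝ × ℝ)) hmem
  have heq : (⇑(e.toLinearMap) : (ℝ × ℝ) → (ℝ × ℝ)) = ⇑e := rfl
  have h2 : ⇑e '' (convexHull ℝ (((S'.image e.symm : Finset (ℝ × ℝ)) : Set (ℝ × ℝ)) \ {e.symm y}))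
      = convexHull ℝ (⇑e '' (((S'.image e.symm : Finset (ℝ × ℝ)) : Set (ℝ × ℝ)) \ {e.symm y})) := by
    rw [← heq]
    exact e.toLinearMap.image_convexHull _
  rw [h2, himg] at hmm
  simpa using hmm


/-- Erdős–Szekeres upper bound: every set of at least `C(2n-4, n-2) + 1` points
in general position contains `n` points in convex position. -/
theorem erdos_szekeres_upper_bound (n : ℕ) (hn : 3 ≤ n)
    (P : Finset (ℝ × ℝ)) (hgp : GeneralPosition P)
    (hcard : (2 * n - 4).choose (n - 2) + 1 ≤ P.card) :
    ∃ S ⊆ P, S.card = n ∧ ConvexPosition S := by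
  classical
  obtain ⟨c, hc⟩ := exists_good_shear P
  set e := shear c with he
  set Q := P.image (fun z => e z) with hQ
  have hinj : Function.Injective (fun z : ℝ × ℝ => e z) := e.injective
  have hQcard : Q.card = P.card := Finset.card_image_of_injective _ hinj
  have hfst : ∀ z : ℝ × ℝ, (e z).1 = z.1 + c * z.2 := fun z => rfl
  have hQdx : DistinctX Q := by
    intro p hp q hq hpq
    obtain ⟨p0, hp0, rfl⟩ := Finset.mem_image.mp hp
    obtain ⟨q0, hq0, rfl⟩ := Finset.mem_image.mp hq
    have hne0 : p0 ≠ q0 := fun h => hpq (by rw [h])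
    rw [hfst, hfst]
    exact hc p0 hp0 q0 hq0 hne0
  have hQgp : GeneralPosition Q := by
    intro p hp q hq r hr hpq hpr hqr hcol
    obtain ⟨p0, hp0, rfl⟩ := Finset.mem_image.mp hp
    obtain ⟨q0, hq0, rfl⟩ := Finset.mem_image.mp hq
    obtain ⟨r0, hr0, rfl⟩ := Finset.mem_image.mp hr
    refine hgp p0 hp0 q0 hq0 r0 hr0 (fun h => hpq (by rw [h])) (fun h => hpr (by rw [h]))
      (fun h => hqr (by rw [h])) ?_
    apply collinear_linequiv_image (e := e)
    have himg : (e : (ℝ × ℝ) → (ℝ × ℝ)) '' {p0, q0, r0} = {e p0, e q0, e r0} := by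
      simp [Set.image_insert_eq]
    rw [himg]
    exact hcol
  have h1 : ((n - 2) + (n - 2)).choose (n - 2) + 1 ≤ Q.card := by
    rw [hQcard]
    have h2 : (n - 2) + (n - 2) = 2 * n - 4 := by omega
    rw [h2]
    exact hcard
  have hn2 : (n - 2) + 2 = n := by omega
  have hgetS : ∃ S' ⊆ Q, S'.card = n ∧ ConvexPosition S' := by
    rcases cupcap ((n - 2) + (n - 2)) (n - 2) (n - 2) rfl Q hQgp hQdx h1 with ⟨q, hq⟩ | ⟨q, hq⟩
    · rw [hn2] at hq
      exact cup_package hQgp hn hq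
    · rw [hn2] at hq
      exact cap_package hQgp hn hq
  obtain ⟨S', hS'Q, hS'card, hS'pos⟩ := hgetS
  refine ⟨S'.image e.symm, ?_, ?_, pullback_convexPos hS'pos⟩
  · intro z hz
    obtain ⟨y, hy, rfl⟩ := Finset.mem_image.mp hz
    obtain ⟨w, hw, rfl⟩ := Finset.mem_image.mp (hS'Q hy)
    simpa using hw
  · rw [Finset.card_image_of_injective _ e.symm.injective, hS'card]
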